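/- Theorem 1: a categorized choice rule satisfies within-category fairness, the over-and-above principle, and quota-filling subject to eligibility if and only if it is the over-and-above choice rule C^OA (i.e., for every set of applicants A and every category c ∈ {o} ∪ R, its category-c selection from A equals that of C^OA). -/
import Mathlib


open Finset

variable {α : Type*} [Fintype α] [DecidableEq α] [LinearOrder α]
variable {ρ : Type*} [Fintype ρ] [DecidableEq ρ]

/-- The top-`k` elements of `A` under the linear (merit) order on `α`, where
higher means more meritorious: the members of `A` that have fewer than `k`
strictly higher-ranked elements in `A`.  If `|A| ≤ k` this is all of `A`. -/
def topk (k : ℕ) (A : Finset α) : Finset α :=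
  A.filter fun i => (A.filter fun j => i < j).card < k

/-- Open-category selection of the over-and-above choice rule: the
`min(qo, |A ∩ acc|)` highest-ranked acceptable applicants. -/
def oaOpen (acc : Finset α) (qo : ℕ) (A : Finset α) : Finset α :=
  topk qo (A ∩ acc)

/-- Reserve-category-`r` selection of the over-and-above choice rule: the
`q r` highest-ranked acceptable type-`r` applicants not selected for the
open category. -/
def oaRes (acc : Finset α) (t : α → Option ρ) (qo : ℕ) (q : ρ → ℕ) (r : ρ)
    (A : Finset α) : Finset α :=
  topk (q r) (((A ∩ acc) \ oaOpen acc qo A).filter fun i => t i = some r)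

/-- The set of applicants chosen by the over-and-above choice rule. -/
def oaChosen (acc : Finset α) (t : α → Option ρ) (qo : ℕ) (q : ρ → ℕ)
    (A : Finset α) : Finset α :=
  oaOpen acc qo A ∪ Finset.univ.biUnion fun r => oaRes acc t qo q r A

/-- The over-and-above choice rule, by category (`none` is the open category,
`some r` is reserve category `r`). -/
def oaSel (acc : Finset α) (t : α → Option ρ) (qo : ℕ) (q : ρ → ℕ) :
    Option ρ → Finset α → Finset α
  | none => oaOpen acc qo
  | some r => oaRes acc t qo q r

/-- A categorized choice rule: for each set of applicants it selects a
pairwise-disjoint family consisting of an open-category selection (acceptable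
applicants, at most `qo` of them) and, for each reserve category `r`, a
category-`r` selection (acceptable type-`r` applicants, at most `q r`). -/
structure CatChoice (acc : Finset α) (t : α → Option ρ) (qo : ℕ) (q : ρ → ℕ) where
  sel : Option ρ → Finset α → Finset α
  sel_open_subset : ∀ A : Finset α, sel none A ⊆ A ∩ acc
  sel_open_card : ∀ A : Finset α, (sel none A).card ≤ qo
  sel_res_subset : ∀ (r : ρ) (A : Finset α),
    sel (some r) A ⊆ (A ∩ acc).filter fun i => t i = some r
  sel_res_card : ∀ (r : ρ) (A : Finset α), (sel (some r) A).card ≤ q r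
  sel_disjoint : ∀ c c' : Option ρ, c ≠ c' → ∀ A : Finset α,
    Disjoint (sel c A) (sel c' A)

/-- The chosen set of a categorized choice rule. -/
def CatChoice.chosen {acc : Finset α} {t : α → Option ρ} {qo : ℕ} {q : ρ → ℕ}
    (C : CatChoice acc t qo q) (A : Finset α) : Finset α :=
  Finset.univ.biUnion fun c : Option ρ => C.sel c A

/-- Over-and-above principle: every acceptable applicant whose rank among the
acceptable applicants of `A` is at most `qo` is selected for an open-category
position. -/
def OverAndAbovePrinciple {acc : Finset α} {t : α → Option ρ} {qo : ℕ} {q : ρ → ℕ}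
    (C : CatChoice acc t qo q) : Prop :=
  ∀ A : Finset α, ∀ i ∈ A ∩ acc,
    ((A ∩ acc).filter fun j => i < j).card < qo → i ∈ C.sel none A

/-- Within-category fairness: among acceptable applicants of the same
category, if a lower-merit one is chosen then so is a higher-merit one. -/
def WithinCategoryFair {acc : Finset α} {t : α → Option ρ} {qo : ℕ} {q : ρ → ℕ}
    (C : CatChoice acc t qo q) : Prop :=
  ∀ A : Finset α, ∀ i ∈ A, ∀ j ∈ A, i ∈ acc → j ∈ acc → t i = t j → j < i →
    j ∈ C.chosen A → i ∈ C.chosen A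

/-- Quota-filling subject to eligibility: if an acceptable reserve-category-`r`
applicant is left unchosen, then all `q r` category-`r` positions are filled. -/
def QuotaFilling {acc : Finset α} {t : α → Option ρ} {qo : ℕ} {q : ρ → ℕ}
    (C : CatChoice acc t qo q) : Prop :=
  ∀ A : Finset α, ∀ i ∈ A, i ∈ acc → ∀ r : ρ, t i = some r → i ∉ C.chosen A →
    (C.sel (some r) A).card = q r


section Helpers

variable {α : Type*} [Fintype α] [DecidableEq α] [LinearOrder α]
variable {ρ : Type*} [Fintype ρ] [DecidableEq ρ]

lemma topk_subset (k : ℕ) (A : Finset α) : topk k A ⊆ A := filter_subset _ _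

lemma mem_topk_of_lt {k : ℕ} {A : Finset α} {i j : α} (hi : i ∈ topk k A)
    (hj : j ∈ A) (hij : i < j) : j ∈ topk k A := by
  simp only [topk, mem_filter] at hi ⊢
  refine ⟨hj, lt_of_le_of_lt (card_le_card fun x hx => ?_) hi.2⟩
  simp only [mem_filter] at hx ⊢
  exact ⟨hx.1, lt_trans hij hx.2⟩

lemma topk_eq_of_card_le {k : ℕ} {A : Finset α} (h : A.card ≤ k) : topk k A = A := by
  apply Finset.filter_true_of_mem
  intro i hi
  have h1 : (A.filter fun j => i < j) ⊆ A.erase i := by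
    intro x hx
    simp only [mem_filter] at hx
    exact mem_erase.2 ⟨ne_of_gt hx.2, hx.1⟩
  have h2 := card_le_card h1
  rw [card_erase_of_mem hi] at h2
  have : 1 ≤ A.card := card_pos.2 ⟨i, hi⟩
  omega

lemma card_topk (k : ℕ) (A : Finset α) : (topk k A).card = min k A.card := by
  set f : α → ℕ := fun i => (A.filter fun j => i < j).card with hf
  have key : ∀ i ∈ A, ∀ j ∈ A, i < j → f j < f i := by
    intro i hi j hj hij
    apply card_lt_card
    constructor
    · intro x hx
      simp only [mem_filter] at hx ⊢
      exact ⟨hx.1, lt_trans hij hx.2⟩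
    · intro hsub
      have : j ∈ A.filter fun x => j < x := hsub (by simp [hi, hj, hij])
      simp at this
  have hinj : Set.InjOn f A := by
    intro i hi j hj hfeq
    rcases lt_trichotomy i j with h | h | h
    · exact absurd hfeq (key i hi j hj h).ne'
    · exact h
    · exact absurd hfeq (key j hj i hi h).ne
  have himg : A.image f = Finset.range A.card := by
    apply Finset.eq_of_subset_of_card_le
    · intro x hx
      simp only [mem_image] at hx
      obtain ⟨i, hi, rfl⟩ := hx
      have h1 : (A.filter fun j => i < j) ⊆ A.erase i := by
        intro x hx
        simp only [mem_filter] at hx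
        exact mem_erase.2 ⟨ne_of_gt hx.2, hx.1⟩
      have h2 := card_le_card h1
      rw [card_erase_of_mem hi] at h2
      have : 1 ≤ A.card := card_pos.2 ⟨i, hi⟩
      simp only [mem_range, hf]
      omega
    · rw [card_range, Finset.card_image_of_injOn hinj]
  have h3 : topk k A = A.filter fun i => f i < k := rfl
  have h4 : ((A.filter fun i => f i < k).image f) = (A.image f).filter (· < k) := by
    ext x
    simp only [mem_image, mem_filter]
    constructor
    · rintro ⟨a, ha, rfl⟩
      exact ⟨⟨a, ha.1, rfl⟩, ha.2⟩
    · rintro ⟨⟨a, ha, rfl⟩, hx⟩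
      exact ⟨a, ⟨ha, hx⟩, rfl⟩
  have h5 : (Finset.range A.card).filter (· < k) = Finset.range (min A.card k) := by
    ext x
    simp only [mem_filter, mem_range, lt_min_iff]
  have h6 : (topk k A).card = ((topk k A).image f).card :=
    (Finset.card_image_of_injOn (hinj.mono (by exact_mod_cast topk_subset k A))).symm
  rw [h6, h3, h4, himg, h5, card_range, Nat.min_comm]

lemma mem_chosen_iff {acc : Finset α} {t : α → Option ρ} {qo : ℕ} {q : ρ → ℕ}
    (C : CatChoice acc t qo q) {A : Finset α} {i : α} :
    i ∈ C.chosen A ↔ ∃ c, i ∈ C.sel c A := by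
  simp [CatChoice.chosen]

lemma not_chosen {acc : Finset α} {t : α → Option ρ} {qo : ℕ} {q : ρ → ℕ}
    (C : CatChoice acc t qo q) {A : Finset α} {i : α} {r : ρ} (htr : t i = some r)
    (h0 : i ∉ C.sel none A) (h1 : i ∉ C.sel (some r) A) : i ∉ C.chosen A := by
  rw [mem_chosen_iff]
  rintro ⟨c, hc⟩
  match c with
  | none => exact h0 hc
  | some r' =>
    have := C.sel_res_subset r' A hc
    simp only [mem_filter] at this
    rw [htr] at this
    cases Option.some_injective _ this.2.symm
    exact h1 hc

end Helpers

/-- Theorem 1. A categorized choice rule satisfies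
within-category fairness, the over-and-above principle, and quota-filling
subject to eligibility if and only if it is the over-and-above choice rule:
for every set of applicants and every category (open or reserve), its
selection equals that of the over-and-above choice rule. -/
theorem over_and_above_characterization
    (acc : Finset α) (t : α → Option ρ) (qo : ℕ) (q : ρ → ℕ)
    (C : CatChoice acc t qo q) :
    (WithinCategoryFair C ∧ OverAndAbovePrinciple C ∧ QuotaFilling C) ↔
      ∀ (A : Finset α) (c : Option ρ), C.sel c A = oaSel acc t qo q c A := by
  constructor
  · rintro ⟨hfair, hoa, hqf⟩ A c
    -- First: the open-category selection.
    have hopen : C.sel none A = oaOpen acc qo A := by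
      have h1 : oaOpen acc qo A ⊆ C.sel none A := by
        intro i hi
        simp only [oaOpen, topk, mem_filter] at hi
        exact hoa A i hi.1 hi.2
      by_cases hc : (A ∩ acc).card ≤ qo
      · have h2 : oaOpen acc qo A = A ∩ acc := topk_eq_of_card_le hc
        refine subset_antisymm ?_ h1
        rw [h2]; exact C.sel_open_subset A
      · push_neg at hc
        have h2 : (oaOpen acc qo A).card = qo := by
          rw [oaOpen, card_topk]; omega
        exact (Finset.eq_of_subset_of_card_le h1 (by rw [h2]; exact C.sel_open_card A)).symm
    match c with
    | none => exact hopen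
    | some r =>
      show C.sel (some r) A = oaRes acc t qo q r A
      set B : Finset α := ((A ∩ acc) \ oaOpen acc qo A).filter (fun i => t i = some r)
        with hB
      have hBsub : ∀ i ∈ B, i ∈ A ∧ i ∈ acc ∧ t i = some r ∧ i ∉ C.sel none A := by
        intro i hi
        simp only [hB, mem_filter, mem_sdiff, mem_inter] at hi
        exact ⟨hi.1.1.1, hi.1.1.2, hi.2, by rw [hopen]; exact hi.1.2⟩
      have hsub : C.sel (some r) A ⊆ B := by
        intro i hi
        have h1 := C.sel_res_subset r A hi
        simp only [mem_filter] at h1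
        have h2 : i ∉ oaOpen acc qo A := by
          rw [← hopen]
          exact fun h =>
            Finset.disjoint_left.mp (C.sel_disjoint (some r) none (by simp) A) hi h
        simp only [hB, mem_filter, mem_sdiff]
        exact ⟨⟨h1.1, h2⟩, h1.2⟩
      have hnotch : ∀ i ∈ B, i ∉ C.sel (some r) A → i ∉ C.chosen A := by
        intro i hi hins
        obtain ⟨_, _, htr, h0⟩ := hBsub i hi
        exact not_chosen C htr h0 hins
      by_cases hcard : B.card ≤ q r
      · have htop : oaRes acc t qo q r A = B := topk_eq_of_card_le hcard
        rw [htop]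
        refine subset_antisymm hsub ?_
        by_contra hnot
        obtain ⟨i, hiB, hins⟩ := not_subset.1 hnot
        obtain ⟨hiA, hiacc, htr, _⟩ := hBsub i hiB
        have hq := hqf A i hiA hiacc r htr (hnotch i hiB hins)
        have h1 : C.sel (some r) A ⊆ B.erase i := by
          intro x hx
          exact mem_erase.2 ⟨fun h => hins (h ▸ hx), hsub hx⟩
        have h2 := card_le_card h1
        rw [card_erase_of_mem hiB] at h2
        have : 1 ≤ B.card := card_pos.2 ⟨i, hiB⟩
        omega
      · push_neg at hcard
        have htopcard : (oaRes acc t qo q r A).card = q r := by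
          rw [oaRes, ← hB, card_topk]; omega
        -- quota is filled
        have hselcard : (C.sel (some r) A).card = q r := by
          have hnsub : ¬ B ⊆ C.sel (some r) A := by
            intro h
            have := card_le_card h
            have := C.sel_res_card r A
            omega
          obtain ⟨i, hiB, hins⟩ := not_subset.1 hnsub
          obtain ⟨hiA, hiacc, htr, _⟩ := hBsub i hiB
          exact hqf A i hiA hiacc r htr (hnotch i hiB hins)
        have hselsub : C.sel (some r) A ⊆ oaRes acc t qo q r A := by
          intro j hj
          by_contra hjtop
          have hjB : j ∈ B := hsub hj
          have hF : q r ≤ (B.filter fun x => j < x).card := by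
            simp only [oaRes, ← hB, topk, mem_filter, not_and, not_lt] at hjtop
            exact hjtop hjB
          have hjF : j ∉ B.filter fun x => j < x := by simp
          have hex : ∃ i ∈ B.filter (fun x => j < x), i ∉ C.sel (some r) A := by
            by_contra hnot
            push_neg at hnot
            have h1 : insert j (B.filter fun x => j < x) ⊆ C.sel (some r) A := by
              intro x hx
              rcases mem_insert.1 hx with rfl | hx
              · exact hj
              · exact hnot x hx
            have h2 := card_le_card h1
            rw [card_insert_of_notMem hjF] at h2
            omega
          obtain ⟨i, hiF, hins⟩ := hex
          have hiB : i ∈ B := (filter_subset _ _) hiF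
          have hji : j < i := (mem_filter.1 hiF).2
          obtain ⟨hiA, hiacc, htri, _⟩ := hBsub i hiB
          obtain ⟨hjA, hjacc, htrj, _⟩ := hBsub j hjB
          have hjch : j ∈ C.chosen A := (mem_chosen_iff C).2 ⟨some r, hj⟩
          have hich := hfair A i hiA j hjA hiacc hjacc (htri.trans htrj.symm) hji hjch
          exact hnotch i hiB hins hich
        exact Finset.eq_of_subset_of_card_le hselsub (by omega)
  · intro h
    refine ⟨?_, ?_, ?_⟩
    · -- within-category fairness
      intro A i hiA j hjA hiacc hjacc htij hji hjch
      rw [mem_chosen_iff] at hjch ⊢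
      obtain ⟨c, hc⟩ := hjch
      rw [h A c] at hc
      have hiAacc : i ∈ A ∩ acc := mem_inter.2 ⟨hiA, hiacc⟩
      match c with
      | none =>
        exact ⟨none, by rw [h A none]; exact mem_topk_of_lt hc hiAacc hji⟩
      | some r =>
        have hjB := topk_subset _ _ hc
        simp only [mem_filter, mem_sdiff] at hjB
        have htir : t i = some r := htij.trans hjB.2
        by_cases hio : i ∈ oaOpen acc qo A
        · exact ⟨none, by rw [h A none]; exact hio⟩
        · have hiB : i ∈ ((A ∩ acc) \ oaOpen acc qo A).filter fun x => t x = some r := by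
            simp only [mem_filter, mem_sdiff]
            exact ⟨⟨hiAacc, hio⟩, htir⟩
          exact ⟨some r, by rw [h A (some r)]; exact mem_topk_of_lt hc hiB hji⟩
    · -- over-and-above principle
      intro A i hi hrank
      rw [h A none]
      exact mem_filter.2 ⟨hi, hrank⟩
    · -- quota filling
      intro A i hiA hiacc r htr hnc
      rw [h A (some r)]
      show (oaRes acc t qo q r A).card = q r
      rw [mem_chosen_iff] at hnc
      push_neg at hnc
      have hio : i ∉ oaOpen acc qo A := by
        intro hio
        exact hnc none (by rw [h A none]; exact hio)
      have hir : i ∉ oaRes acc t qo q r A := by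
        intro hir
        exact hnc (some r) (by rw [h A (some r)]; exact hir)
      set B : Finset α := ((A ∩ acc) \ oaOpen acc qo A).filter (fun x => t x = some r)
        with hB
      have hiB : i ∈ B := by
        simp only [hB, mem_filter, mem_sdiff, mem_inter]
        exact ⟨⟨⟨hiA, hiacc⟩, hio⟩, htr⟩
      have h1 : oaRes acc t qo q r A ⊆ B.erase i := by
        intro x hx
        exact mem_erase.2 ⟨fun he => hir (he ▸ hx), topk_subset _ _ hx⟩
      have h2 := card_le_card h1
      rw [card_erase_of_mem hiB] at h2
      have h3 : 1 ≤ B.card := card_pos.2 ⟨i, hiB⟩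
      have h4 : (oaRes acc t qo q r A).card = min (q r) B.card := by
        rw [oaRes, ← hB, card_topk]
      omega
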